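/- arXiv:2207.03419 — 7 statements merged into one kernel-verified Lean document; each statement's English description precedes it below -/
import Mathlib

section
/- Let L be an associative ring with identity, M a left L-module, and I a fixed left ideal of L. Suppose that (a) every L-module homomorphism f : X → M from any left ideal X contained in I extends to an L-module homomorphism I → M, and (b) every L-module homomorphism g : Y → M from any left ideal Y containing I extends to an L-module homomorphism L → M. Then M is an injective left L-module. -/
/-- Baer-type criterion relative to a fixed left ideal `I`:
if every homomorphism from a left ideal contained in `I` extends to `I`,
and every homomorphism from a left ideal containing `I` extends to `L`,
then `M` is injective. -/
theorem stmt0 (L M : Type) [Ring L] [AddCommGroup M] [Module L M]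
    (I : Submodule L L)
    (h1 : ∀ X : Submodule L L, ∀ hXI : X ≤ I, ∀ f : X →ₗ[L] M,
      ∃ g : I →ₗ[L] M, ∀ x (hx : x ∈ X), g ⟨x, hXI hx⟩ = f ⟨x, hx⟩)
    (h2 : ∀ Y : Submodule L L, I ≤ Y → ∀ f : Y →ₗ[L] M,
      ∃ g : L →ₗ[L] M, ∀ y (hy : y ∈ Y), g y = f ⟨y, hy⟩) :
    Module.Injective L M := by
  apply Module.Baer.injective
  intro X f
  obtain ⟨g, hg⟩ := h1 (X ⊓ I) inf_le_right (f.comp (Submodule.inclusion inf_le_left))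
  set F : L →ₗ.[L] M := ⟨X, f⟩ with hF
  set G : L →ₗ.[L] M := ⟨I, g⟩ with hG
  have hagree : ∀ (x : F.domain) (y : G.domain), (x : L) = y → F x = G y := by
    rintro ⟨x, hx⟩ ⟨y, hy⟩ h
    dsimp at h
    subst h
    have := hg x ⟨hx, hy⟩
    exact this.symm
  obtain ⟨g', hg'⟩ := h2 (X ⊔ I) le_sup_right (F.sup G hagree).toFun
  refine ⟨g', fun x hx => ?_⟩
  rw [hg' x ((le_sup_left : X ≤ X ⊔ I) hx)]
  exact ((F.left_le_sup G hagree).2 (x := ⟨x, hx⟩)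
    (y := ⟨x, (le_sup_left : X ≤ X ⊔ I) hx⟩) rfl).symm
end

section
/- Let E be a finite directed graph. Then E has disjoint cycles (i.e., every vertex of E is the base of at most one cycle) if and only if every nontrivial closed path in E is a power of a cycle. -/
/-- A directed graph: vertices, edges, source and range maps. -/
structure DirGraph where
  V : Type
  E : Type
  s : E → V
  r : E → V

namespace DirGraph

variable (G : DirGraph)

/-- A (finite) path, encoded as a list of consecutive edges
(`r eᵢ = s eᵢ₊₁`); the empty list encodes a trivial path. -/
def IsPath (p : List G.E) : Prop := p.Chain' (fun e f => G.r e = G.s f)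

/-- The nontrivial path `p` starts at the vertex `v`. -/
def StartsAt (p : List G.E) (v : G.V) : Prop := ∃ e ∈ p.head?, G.s e = v

/-- The nontrivial path `p` ends at the vertex `v`. -/
def EndsAt (p : List G.E) (v : G.V) : Prop := ∃ e ∈ p.getLast?, G.r e = v

/-- A closed path: a nontrivial path whose range equals its source. -/
def IsClosedPath (p : List G.E) : Prop :=
  p ≠ [] ∧ G.IsPath p ∧ ∀ e ∈ p.getLast?, ∀ f ∈ p.head?, G.r e = G.s f

/-- A cycle: a closed path whose source vertices are pairwise distinct. -/
def IsCycle (p : List G.E) : Prop := G.IsClosedPath p ∧ (p.map G.s).Nodup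

/-- `E` has disjoint cycles: each vertex is the base of at most one cycle. -/
def HasDisjointCycles : Prop :=
  ∀ (v : G.V) (c d : List G.E), G.IsCycle c → G.IsCycle d →
    G.StartsAt c v → G.StartsAt d v → c = d

end DirGraph

/- ### auxiliary list lemmas -/

private lemma repf_succ {α : Type*} (c : List α) (m : ℕ) :
    (List.replicate (m+1) c).flatten = c ++ (List.replicate m c).flatten := by
  simp [List.replicate_succ]

private lemma repf_add {α : Type*} (c : List α) (m n : ℕ) :
    (List.replicate (m+n) c).flatten
      = (List.replicate m c).flatten ++ (List.replicate n c).flatten := by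
  rw [List.replicate_add, List.flatten_append]

private lemma sandwich {α : Type*} (x u : List α) :
    ∀ k, x ++ (List.replicate k (u ++ x)).flatten ++ u
      = (List.replicate (k+1) (x ++ u)).flatten := by
  intro k
  induction k with
  | zero => simp
  | succ k ih =>
    rw [repf_succ, repf_succ]
    calc x ++ ((u ++ x) ++ (List.replicate k (u ++ x)).flatten) ++ u
        = (x ++ u) ++ (x ++ (List.replicate k (u ++ x)).flatten ++ u) := by
          simp [List.append_assoc]
      _ = (x ++ u) ++ (List.replicate (k+1) (x ++ u)).flatten := by rw [ih]

private lemma count_pow {α : Type*} [DecidableEq α] (a : α) (l : List α) :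
    ∀ m, List.count a (List.replicate m l).flatten = m * List.count a l := by
  intro m
  induction m with
  | zero => simp
  | succ m ih => rw [repf_succ, List.count_append, ih]; ring

private lemma dup_decomp {α β : Type*} (g : α → β) :
    ∀ (l : List α), ¬ (l.map g).Nodup →
      ∃ x e y f z, l = x ++ e :: (y ++ f :: z) ∧ g e = g f := by
  intro l
  induction l with
  | nil => intro h; simp at h
  | cons a t ih =>
    intro h
    rw [List.map_cons, List.nodup_cons] at h
    by_cases hmem : g a ∈ t.map g
    · obtain ⟨f, hf, hgf⟩ := List.mem_map.1 hmem
      obtain ⟨y, z, rfl⟩ := List.append_of_mem hf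
      exact ⟨[], a, y, f, z, by simp, hgf.symm⟩
    · have ht : ¬ (t.map g).Nodup := fun hnd => h ⟨hmem, hnd⟩
      obtain ⟨x, e, y, f, z, rfl, hef⟩ := ih ht
      exact ⟨a :: x, e, y, f, z, by simp, hef⟩

namespace DirGraph

variable {G : DirGraph}

/-- rotation of a cycle is a cycle -/
private lemma rotate_cycle {x u : List G.E} (hu : u ≠ []) (hc : G.IsCycle (x ++ u)) :
    G.IsCycle (u ++ x) := by
  rcases eq_or_ne x [] with rfl | hx0
  · simpa using hc
  obtain ⟨⟨hne, hchain, hclosed⟩, hnd⟩ := hc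
  rw [DirGraph.IsPath, List.Chain', List.isChain_append] at hchain
  obtain ⟨hcx, hcu, hj⟩ := hchain
  have hclosed' : G.r (u.getLast hu) = G.s (x.head hx0) := by
    apply hclosed
    · simp [List.getLast?_append, List.getLast?_eq_getLast hu]
    · simp [List.head?_append, List.head?_eq_head hx0]
  have hj' : G.r (x.getLast hx0) = G.s (u.head hu) := by
    apply hj
    · simp [List.getLast?_eq_getLast hx0]
    · simp [List.head?_eq_head hu]
  refine ⟨⟨by simp [hu], ?_, ?_⟩, ?_⟩
  · rw [DirGraph.IsPath, List.Chain', List.isChain_append]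
    refine ⟨hcu, hcx, ?_⟩
    intro a ha b hb
    rw [List.getLast?_eq_getLast hu, Option.mem_some_iff] at ha
    rw [List.head?_eq_head hx0, Option.mem_some_iff] at hb
    subst ha; subst hb
    exact hclosed'
  · intro a ha b hb
    rw [List.getLast?_append, List.getLast?_eq_getLast hx0] at ha
    simp only [Option.some_or, Option.mem_some_iff] at ha
    rw [List.head?_append, List.head?_eq_head hu] at hb
    simp only [Option.or, Option.mem_some_iff] at hb
    subst ha; subst hb
    exact hj'
  · rw [List.map_append]
    rw [List.map_append] at hnd
    exact List.perm_append_comm.nodup hnd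

/-- the key combination lemma -/
private lemma combo (hG : G.HasDisjointCycles) {c c₁ : List G.E}
    (hc : G.IsCycle c) (hc₁ : G.IsCycle c₁) (k : ℕ) (f : G.E)
    (hstart : G.StartsAt c₁ (G.s f)) :
    ∀ (m : ℕ) (x z : List G.E), (List.replicate m c).flatten = x ++ f :: z →
      x ++ (List.replicate k c₁).flatten ++ f :: z
        = (List.replicate (m+k) c).flatten := by
  intro m
  induction m with
  | zero =>
    intro x z h
    exact absurd h.symm (by simp)
  | succ m ih =>
    intro x z h
    rw [repf_succ] at h
    by_cases hlt : x.length < c.length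
    · -- insertion point inside the first copy of c
      have hx : c.take x.length = x := by
        have h' := congrArg (List.take x.length) h
        rwa [List.take_append_of_le_length hlt.le, List.take_left] at h'
      have hcd : c = x ++ c.drop x.length := by
        conv_lhs => rw [← List.take_append_drop x.length c, hx]
      obtain ⟨a, t, hat⟩ : ∃ a t, c.drop x.length = a :: t := by
        apply List.exists_cons_of_ne_nil
        intro hnil
        rw [List.drop_eq_nil_iff] at hnil
        omega
      rw [hcd, hat] at h
      rw [List.append_assoc] at h
      have h2 := List.append_cancel_left h
      rw [List.cons_append, List.cons.injEq] at h2
      obtain ⟨rfl, hz⟩ := h2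
      have hc' : c = x ++ a :: t := by rw [hcd, hat]
      -- rotation
      have hc2 : G.IsCycle ((a :: t) ++ x) := by
        apply rotate_cycle (by simp)
        rw [← hc']; exact hc
      have hstart2 : G.StartsAt ((a :: t) ++ x) (G.s a) := ⟨a, by simp, rfl⟩
      have hc1eq : c₁ = (a :: t) ++ x := hG (G.s a) c₁ _ hc₁ hc2 hstart hstart2
      subst hc1eq
      rw [← hz, hc']
      calc x ++ (List.replicate k ((a :: t) ++ x)).flatten
            ++ a :: (t ++ (List.replicate m (x ++ a :: t)).flatten)
          = (x ++ (List.replicate k ((a :: t) ++ x)).flatten ++ (a :: t))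
              ++ (List.replicate m (x ++ a :: t)).flatten := by
            simp [List.append_assoc]
        _ = (List.replicate (k+1) (x ++ (a :: t))).flatten
              ++ (List.replicate m (x ++ a :: t)).flatten := by rw [sandwich]
        _ = (List.replicate (m+1+k) (x ++ a :: t)).flatten := by
            rw [show m+1+k = (k+1)+m by omega]
            exact (repf_add _ (k+1) m).symm
    · -- peel off one copy of c
      push_neg at hlt
      have hx : c = x.take c.length := by
        have h' := congrArg (List.take c.length) h
        rwa [List.take_left, List.take_append_of_le_length hlt] at h'
      have hxd : x = c ++ x.drop c.length := by
        conv_lhs => rw [← List.take_append_drop c.length x, ← hx]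
      rw [hxd, List.append_assoc] at h
      have h2 := List.append_cancel_left h
      have := ih (x.drop c.length) z h2
      rw [hxd, show m+1+k = (m+k)+1 by omega, repf_succ, ← this]
      simp [List.append_assoc]

end DirGraph

private lemma mem_getLast?_right {α : Type*} (l₁ : List α) {l₂ : List α} (h₂ : l₂ ≠ []) :
    l₂.getLast h₂ ∈ (l₁ ++ l₂).getLast? := by
  rw [List.getLast?_append, List.getLast?_eq_getLast h₂]
  simp

private lemma mem_head?_left {α : Type*} {l₁ : List α} (l₂ : List α) (h₁ : l₁ ≠ []) :
    l₁.head h₁ ∈ (l₁ ++ l₂).head? := by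
  rw [List.head?_append, List.head?_eq_head h₁]
  simp

private lemma forward_key {G : DirGraph} (hG : G.HasDisjointCycles) :
    ∀ (n : ℕ) (p : List G.E), p.length ≤ n → G.IsClosedPath p →
      ∃ (c : List G.E) (m : ℕ), G.IsCycle c ∧ 1 ≤ m ∧
        p = (List.replicate m c).flatten := by
  intro n
  induction n with
  | zero =>
    intro p hl hp
    exact absurd (List.length_eq_zero_iff.1 (Nat.le_zero.1 hl)) hp.1
  | succ n ih =>
    intro p hl hp
    by_cases hnd : (p.map G.s).Nodup
    · exact ⟨p, 1, ⟨hp, hnd⟩, le_refl 1, by simp⟩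
    obtain ⟨x, e, y, f, z, rfl, hef⟩ := dup_decomp G.s p hnd
    obtain ⟨hne, hchain, hcl⟩ := hp
    have hchain' : List.Chain' (fun e f => G.r e = G.s f) ((x ++ (e :: y)) ++ (f :: z)) := by
      simpa [List.append_assoc, DirGraph.IsPath] using hchain
    rw [List.Chain', List.isChain_append, List.isChain_append] at hchain'
    obtain ⟨⟨hcx, hcb, hjxb⟩, hcf, hjbf⟩ := hchain'
    have hbf : G.r ((e :: y).getLast (by simp)) = G.s f := by
      apply hjbf
      · exact mem_getLast?_right x (by simp)
      · simp
    -- b := e :: y is a closed path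
    have hb : G.IsClosedPath (e :: y) := by
      refine ⟨by simp, hcb, ?_⟩
      intro a ha b hb
      rw [List.getLast?_eq_getLast (by simp : (e :: y) ≠ []), Option.mem_some_iff] at ha
      rw [List.head?_cons, Option.mem_some_iff] at hb
      subst ha; subst hb
      exact hbf.trans hef.symm
    -- q := x ++ f :: z is a closed path
    have hq : G.IsClosedPath (x ++ f :: z) := by
      refine ⟨by simp, ?_, ?_⟩
      · rw [DirGraph.IsPath, List.Chain', List.isChain_append]
        refine ⟨hcx, hcf, ?_⟩
        intro a ha b hb
        rw [List.head?_cons, Option.mem_some_iff] at hb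
        subst hb
        have := hjxb a ha e (by simp)
        exact this.trans hef
      · intro a ha b hb
        have ha' : a = (f :: z).getLast (by simp) := by
          rw [List.getLast?_append, List.getLast?_eq_getLast (by simp : (f :: z) ≠ [])] at ha
          exact (by simpa using ha : _ = a).symm
        have hlastmem : (f :: z).getLast (by simp) ∈ (x ++ e :: (y ++ f :: z)).getLast? := by
          rw [show x ++ e :: (y ++ f :: z) = (x ++ e :: y) ++ (f :: z) by simp]
          exact mem_getLast?_right _ (by simp)
        rcases eq_or_ne x [] with rfl | hx0
        · rw [List.nil_append, List.head?_cons, Option.mem_some_iff] at hb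
          subst hb; subst ha'
          have := hcl _ hlastmem e (by simp)
          exact this.trans hef
        · rw [List.head?_append, List.head?_eq_head hx0] at hb
          have hb' : b = x.head hx0 := (by simpa using hb : _ = b).symm
          subst hb'; subst ha'
          exact hcl _ hlastmem _ (mem_head?_left _ hx0)
    have hlb : (e :: y).length ≤ n := by
      simp only [List.length_append, List.length_cons] at hl ⊢
      omega
    have hlq : (x ++ f :: z).length ≤ n := by
      simp only [List.length_append, List.length_cons] at hl ⊢
      omega
    obtain ⟨c₁, k, hc₁, hk, hbe⟩ := ih (e :: y) hlb hb
    obtain ⟨c, m, hc, hm, hqe⟩ := ih (x ++ f :: z) hlq hq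
    obtain ⟨k', rfl⟩ : ∃ k', k = k' + 1 := ⟨k - 1, by omega⟩
    obtain ⟨a, t₁, rfl⟩ := List.exists_cons_of_ne_nil hc₁.1.1
    rw [repf_succ, List.cons_append] at hbe
    injection hbe with h1 h2
    have hstart : G.StartsAt (a :: t₁) (G.s f) := ⟨a, by simp, by rw [← h1, hef]⟩
    have hcombo := DirGraph.combo hG hc hc₁ (k' + 1) f hstart m x z hqe.symm
    refine ⟨c, m + (k' + 1), hc, by omega, ?_⟩
    rw [show x ++ e :: (y ++ f :: z) = x ++ (e :: y) ++ (f :: z) by simp, ← hcombo,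
      repf_succ, List.cons_append, h1, h2]

/-- A finite graph has disjoint cycles iff every nontrivial closed path
is a power of a cycle. -/
theorem stmt2 (G : DirGraph) [Finite G.V] [Finite G.E] :
    G.HasDisjointCycles ↔
      ∀ p : List G.E, G.IsClosedPath p →
        ∃ (c : List G.E) (m : ℕ), G.IsCycle c ∧ 1 ≤ m ∧
          p = (List.replicate m c).flatten := by
  constructor
  · intro hG p hp
    exact forward_key hG p.length p le_rfl hp
  · intro H v c d hc hd hcs hds
    classical
    have hcne : c ≠ [] := hc.1.1
    have hdne : d ≠ [] := hd.1.1
    have hcv : G.s (c.head hcne) = v := by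
      obtain ⟨e, he, hev⟩ := hcs
      rw [List.head?_eq_head hcne, Option.mem_some_iff] at he
      subst he; exact hev
    have hdv : G.s (d.head hdne) = v := by
      obtain ⟨e, he, hev⟩ := hds
      rw [List.head?_eq_head hdne, Option.mem_some_iff] at he
      subst he; exact hev
    have hcc : G.r (c.getLast hcne) = v := by
      have := hc.1.2.2 (c.getLast hcne) (by rw [List.getLast?_eq_getLast hcne]; simp)
        (c.head hcne) (by rw [List.head?_eq_head hcne]; simp)
      exact this.trans hcv
    have hdc : G.r (d.getLast hdne) = v := by
      have := hd.1.2.2 (d.getLast hdne) (by rw [List.getLast?_eq_getLast hdne]; simp)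
        (d.head hdne) (by rw [List.head?_eq_head hdne]; simp)
      exact this.trans hdv
    have hcd : G.IsClosedPath (c ++ d) := by
      refine ⟨by simp [hcne], ?_, ?_⟩
      · rw [DirGraph.IsPath, List.Chain', List.isChain_append]
        refine ⟨hc.1.2.1, hd.1.2.1, ?_⟩
        intro a ha b hb
        rw [List.getLast?_eq_getLast hcne, Option.mem_some_iff] at ha
        rw [List.head?_eq_head hdne, Option.mem_some_iff] at hb
        subst ha; subst hb
        rw [hcc, hdv]
      · intro a ha b hb
        have ha' : a = d.getLast hdne := by
          rw [List.getLast?_append, List.getLast?_eq_getLast hdne] at ha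
          exact (by simpa using ha : _ = a).symm
        have hb' : b = c.head hcne := by
          rw [List.head?_append, List.head?_eq_head hcne] at hb
          exact (by simpa using hb : _ = b).symm
        subst ha'; subst hb'
        rw [hdc, hcv]
    obtain ⟨g, m, hg, hm, hcdg⟩ := H (c ++ d) hcd
    have hgne : g ≠ [] := hg.1.1
    obtain ⟨m', rfl⟩ : ∃ m', m = m' + 1 := ⟨m - 1, by omega⟩
    have hheads : c.head hcne = g.head hgne := by
      have h0 := congrArg List.head? hcdg
      rw [List.head?_append, List.head?_eq_head hcne, repf_succ, List.head?_append,
        List.head?_eq_head hgne] at h0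
      simpa using h0
    have hgv : G.s (g.head hgne) = v := by rw [← hheads]; exact hcv
    have hvc : v ∈ c.map G.s := List.mem_map.2 ⟨c.head hcne, List.head_mem hcne, hcv⟩
    have hvd : v ∈ d.map G.s := List.mem_map.2 ⟨d.head hdne, List.head_mem hdne, hdv⟩
    have hvg : v ∈ g.map G.s := List.mem_map.2 ⟨g.head hgne, List.head_mem hgne, hgv⟩
    have hcnt := congrArg (List.count v) (congrArg (List.map G.s) hcdg)
    rw [List.map_append, List.count_append, List.count_eq_one_of_mem hc.2 hvc,
      List.count_eq_one_of_mem hd.2 hvd, List.map_flatten, List.map_replicate,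
      count_pow, List.count_eq_one_of_mem hg.2 hvg] at hcnt
    have hm2 : m' = 1 := by omega
    subst hm2
    have hgg : c ++ d = g ++ g := by
      rw [hcdg]; simp [List.replicate_succ]
    have hdpos : 0 < d.length := List.length_pos_iff.2 hdne
    have hcpos : 0 < c.length := List.length_pos_iff.2 hcne
    have hgpos : 0 < g.length := List.length_pos_iff.2 hgne
    have hlen : c.length + d.length = g.length + g.length := by
      have := congrArg List.length hgg
      simpa using this
    have hcg : c.length = g.length := by
      by_contra hnecg
      rcases Nat.lt_or_ge c.length g.length with hlt | hge
      · have hb1 : c.length < (c ++ d).length := by simp; omega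
        have hb2 : c.length < (g ++ g).length := by simp; omega
        have h1 : (c ++ d)[c.length]'hb1 = d.head hdne := by
          rw [List.getElem_append_right (le_refl c.length)]
          simp [List.head_eq_getElem]
        have h2 : (g ++ g)[c.length]'hb2 = g[c.length]'hlt :=
          List.getElem_append_left hlt
        have h3 : g[c.length]'hlt = d.head hdne := by
          rw [← h2, ← h1]
          exact (List.getElem_of_eq hgg.symm _)
        have h4 : (g.map G.s)[c.length]'(by simpa using hlt)
            = (g.map G.s)[0]'(by simpa using hgpos) := by
          rw [List.getElem_map, List.getElem_map, h3, List.getElem_zero]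
          rw [hdv, hgv]
        have := (hg.2.getElem_inj_iff).1 h4
        omega
      · have hglt : g.length < c.length := by omega
        have hb1 : g.length < (c ++ d).length := by simp; omega
        have h1 : (c ++ d)[g.length]'hb1 = (c)[g.length]'hglt :=
          List.getElem_append_left hglt
        have hb2 : g.length < (g ++ g).length := by simp; omega
        have h2 : (g ++ g)[g.length]'hb2 = g.head hgne := by
          rw [List.getElem_append_right (le_refl g.length)]
          simp [List.head_eq_getElem]
        have h3 : (c)[g.length]'hglt = g.head hgne := by
          rw [← h1, ← h2]
          exact (List.getElem_of_eq hgg _)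
        have h4 : (c.map G.s)[g.length]'(by simpa using hglt)
            = (c.map G.s)[0]'(by simpa using hcpos) := by
          rw [List.getElem_map, List.getElem_map, h3, List.getElem_zero]
          rw [hgv, hcv]
        have := (hc.2.getElem_inj_iff).1 h4
        omega
    obtain ⟨h5, h6⟩ := List.append_inj hgg hcg
    rw [h5, h6]
end

section
/- Let E be a finite directed graph with disjoint cycles (every vertex is the base of at most one cycle). If c and d are cycles in E that share a common vertex, then c and d traverse exactly the same set of vertices; more precisely, d is a rotation of c. -/
section Aux
variable (G : DirGraph)

open List

lemma closed_iff (p : List G.E) (hne : p ≠ []) :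
    G.IsClosedPath p ↔ (p ++ p).Chain' (fun e f => G.r e = G.s f) := by
  rw [List.Chain', List.isChain_append]
  constructor
  · rintro ⟨-, hp, hcl⟩; exact ⟨hp, hp, hcl⟩
  · rintro ⟨hp, -, hcl⟩; exact ⟨hne, hp, hcl⟩

lemma rotate_cycle (p : List G.E) (h : G.IsCycle p) (n : ℕ) (hn : n ≤ p.length) :
    G.IsCycle (p.rotate n) := by
  obtain ⟨hcp, hnd⟩ := h
  have hne := hcp.1
  constructor
  · rw [closed_iff G _ (by simpa using hne)]
    have h2 : (p ++ p).Chain' (fun e f => G.r e = G.s f) := (closed_iff G p hne).1 hcp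
    have h3 : (p ++ p ++ p).Chain' (fun e f => G.r e = G.s f) := by
      rw [List.Chain', List.isChain_append]
      exact ⟨h2, hcp.2.1, by
        intro e he f hf
        rw [List.getLast?_append_of_ne_nil _ hne] at he
        exact hcp.2.2 e he f hf⟩
    refine h3.infix ?_
    rw [List.rotate_eq_drop_append_take hn]
    refine ⟨p.take n, p.drop n, ?_⟩
    calc p.take n ++ (p.drop n ++ p.take n ++ (p.drop n ++ p.take n)) ++ p.drop n
        = (p.take n ++ p.drop n) ++ (p.take n ++ p.drop n) ++ (p.take n ++ p.drop n) := by
          simp only [List.append_assoc]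
      _ = p ++ p ++ p := by rw [List.take_append_drop]
  · rw [List.map_rotate]; exact List.nodup_rotate.2 hnd

lemma rotate_startsAt (p : List G.E) (n : ℕ) (hn : n < p.length) :
    G.StartsAt (p.rotate n) (G.s (p.get ⟨n, hn⟩)) := by
  refine ⟨p.get ⟨n, hn⟩, ?_, rfl⟩
  rw [List.rotate_eq_drop_append_take hn.le, List.head?_append,
    List.head?_drop, List.getElem?_eq_getElem hn]
  rfl
end Aux

/-- In a finite graph with disjoint cycles, two cycles sharing a vertex
traverse the same set of vertices; more precisely one is a rotation of
the other. -/
theorem stmt3 (G : DirGraph) [Finite G.V] [Finite G.E]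
    (hdc : G.HasDisjointCycles) (c d : List G.E)
    (hc : G.IsCycle c) (hd : G.IsCycle d) (v : G.V)
    (hvc : v ∈ c.map G.s) (hvd : v ∈ d.map G.s) :
    (∀ w : G.V, w ∈ c.map G.s ↔ w ∈ d.map G.s) ∧ ∃ n : ℕ, d = c.rotate n := by
  obtain ⟨e, hec, hev⟩ := List.mem_map.1 hvc
  obtain ⟨i, hi⟩ := List.mem_iff_get.1 hec
  obtain ⟨f, hfd, hfv⟩ := List.mem_map.1 hvd
  obtain ⟨j, hj⟩ := List.mem_iff_get.1 hfd
  have hc' := rotate_cycle G c hc i i.2.le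
  have hd' := rotate_cycle G d hd j j.2.le
  have hsc : G.StartsAt (c.rotate i) v := by
    have := rotate_startsAt G c i i.2
    rwa [hi, hev] at this
  have hsd : G.StartsAt (d.rotate j) v := by
    have := rotate_startsAt G d j j.2
    rwa [hj, hfv] at this
  have heq : c.rotate i = d.rotate j := hdc v _ _ hc' hd' hsc hsd
  have hdrot : d = c.rotate (i + (d.length - j)) := by
    rw [← List.rotate_rotate, heq, List.rotate_rotate,
      Nat.add_sub_cancel' j.2.le, List.rotate_length]
  refine ⟨fun w => ?_, _, hdrot⟩
  rw [hdrot, List.map_rotate, List.mem_rotate]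
end

section
/- Let E be a finite directed graph with disjoint cycles and with no source vertices. Then E contains at least one source cycle, i.e., a cycle with no entrances. -/
open Function in
/-- Given a "reverse-edge choice" function `F` (picking for every vertex an edge
into it) and a periodic point `v` of the induced backwards-vertex map `g`, the
list of choice edges along the orbit of `v`, read backwards, is a cycle. -/
private lemma cyc_spec (G : DirGraph) (F : G.V → G.E) (hF : ∀ v, G.r (F v) = v)
    (g : G.V → G.V) (hg : ∀ w, g w = G.s (F w))
    (v : G.V) (n : ℕ) (hn : 0 < n) (hv : g^[n] v = v) :
    ∃ c : List G.E, G.IsCycle c ∧ G.StartsAt c v ∧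
      (∀ e ∈ c, ∃ i, e = F (g^[i] v)) ∧
      (∀ x ∈ c.map G.s, ∃ i, x = g^[i] v) ∧
      (∀ i, F (g^[i] v) ∈ c) := by
  have hper : IsPeriodicPt g n v := hv
  set m := minimalPeriod g v with hmdef
  have hm0 : 0 < m := hper.minimalPeriod_pos hn
  obtain ⟨k, hk⟩ : ∃ k, m = k + 1 := ⟨m - 1, by omega⟩
  have hmper : g^[m] v = v := iterate_minimalPeriod
  set h : ℕ → G.E := fun i => F (g^[i] v) with hh
  set c : List G.E := ((List.range m).map h).reverse with hc
  have hsh : ∀ i, G.s (h i) = g^[i+1] v := by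
    intro i
    rw [iterate_succ_apply']
    exact (hg _).symm
  have hrh : ∀ i, G.r (h i) = g^[i] v := fun i => hF _
  -- explicit form of c
  have hcform : c = h k :: ((List.range k).map h).reverse := by
    rw [hc, hk, List.range_succ, List.map_append, List.reverse_append]
    rfl
  have hchead : c.head? = some (h k) := by rw [hcform]; rfl
  have hclast : c.getLast? = some (h 0) := by
    rw [hc, List.getLast?_reverse, hk, List.range_succ_eq_map]
    rfl
  have hmem : ∀ e, e ∈ c ↔ ∃ i < m, h i = e := by
    intro e
    simp [hc, List.mem_reverse, List.mem_map, List.mem_range]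
  -- it is a path
  have hpath : G.IsPath c := by
    rw [DirGraph.IsPath, hc]; unfold List.Chain'; rw [List.isChain_reverse]
    rw [List.isChain_map]
    rw [hk, List.isChain_range_succ]
    intro i _
    show G.r (h (i+1)) = G.s (h i)
    rw [hrh, hsh]
  have hclosed : G.IsClosedPath c := by
    refine ⟨by rw [hcform]; simp, hpath, ?_⟩
    intro e he f hf
    rw [hclast, Option.mem_some_iff] at he
    rw [hchead, Option.mem_some_iff] at hf
    subst he; subst hf
    rw [hrh, hsh]
    show g^[0] v = g^[k+1] v
    rw [← hk, hmper]
    rfl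
  -- sources are distinct
  have hnodup : (c.map G.s).Nodup := by
    simp only [hc, List.map_reverse, List.map_map, List.nodup_reverse]
    refine List.Nodup.map_on ?_ List.nodup_range
    intro i hi j hj hij
    rw [List.mem_range] at hi hj
    have hij' : g^[i+1] v = g^[j+1] v := by
      have h1 := hsh i
      have h2 := hsh j
      simp only [Function.comp_apply] at hij
      rw [← h1, ← h2, hij]
    have hmodeq : (i+1) % m = (j+1) % m := by
      refine iterate_injOn_Iio_minimalPeriod (f := g) (x := v)
        (Set.mem_Iio.2 (Nat.mod_lt _ hm0)) (Set.mem_Iio.2 (Nat.mod_lt _ hm0)) ?_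
      show g^[(i+1) % m] v = g^[(j+1) % m] v
      rw [iterate_mod_minimalPeriod_eq, iterate_mod_minimalPeriod_eq, hij']
    have hkey : ∀ a, a < m → (a+1) % m = if a+1 = m then 0 else a+1 := by
      intro a ha
      split
      · next hq => rw [hq, Nat.mod_self]
      · next hq => exact Nat.mod_eq_of_lt (by omega)
    rw [hkey i hi, hkey j hj] at hmodeq
    split_ifs at hmodeq <;> omega
  have hstarts : G.StartsAt c v := by
    refine ⟨h k, by rw [hchead]; rfl, ?_⟩
    rw [hsh, ← hk, hmper]
  refine ⟨c, ⟨hclosed, hnodup⟩, hstarts, ?_, ?_, ?_⟩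
  · intro e he
    obtain ⟨i, _, hi⟩ := (hmem e).1 he
    exact ⟨i, hi.symm⟩
  · intro x hx
    rw [List.mem_map] at hx
    obtain ⟨e, he, hex⟩ := hx
    obtain ⟨i, _, hi⟩ := (hmem e).1 he
    exact ⟨i + 1, by rw [← hex, ← hi, hsh]⟩
  · intro i
    have : h i = h (i % m) := by
      rw [hh]
      simp only
      rw [iterate_mod_minimalPeriod_eq]
    rw [show F (g^[i] v) = h i from rfl, this, hmem]
    exact ⟨i % m, Nat.mod_lt _ hm0, rfl⟩

private lemma exists_per {V : Type} [Finite V] (g : V → V) (v : V) :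
    ∃ u n, 0 < n ∧ g^[n] u = u := by
  obtain ⟨i, j, hne, he⟩ := Finite.exists_ne_map_eq_of_infinite (fun n : ℕ => g^[n] v)
  rcases Nat.lt_or_ge i j with hij | hij
  · refine ⟨g^[i] v, j - i, by omega, ?_⟩
    rw [← Function.iterate_add_apply, show j - i + i = j by omega]
    exact he.symm
  · have hij' : j < i := by omega
    refine ⟨g^[j] v, i - j, by omega, ?_⟩
    rw [← Function.iterate_add_apply, show i - j + j = i by omega]
    exact he

/-- A finite nonempty graph with disjoint cycles and no source vertices
contains a source cycle (a cycle without entrances). -/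
theorem stmt4 (G : DirGraph) [Finite G.V] [Finite G.E] [Nonempty G.V]
    (hdc : G.HasDisjointCycles) (hnosrc : ∀ v : G.V, ∃ e : G.E, G.r e = v) :
    ∃ c : List G.E, G.IsCycle c ∧ ∀ e : G.E, G.r e ∈ c.map G.s → e ∈ c := by
  classical
  choose f hf using hnosrc
  -- `cond v`: v is periodic for the backwards map of `f` and has an extra edge into it
  set cond : G.V → Prop := fun v =>
    (∃ kk, 0 < kk ∧ (fun x => G.s (f x))^[kk] v = v) ∧ ∃ e, G.r e = v ∧ e ≠ f v with hconddef
  have hFex : ∀ v, ∃ e, G.r e = v ∧ (cond v → e ≠ f v) ∧ (¬ cond v → e = f v) := by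
    intro v
    by_cases hcv : cond v
    · obtain ⟨e, he, hne⟩ := hcv.2
      exact ⟨e, he, fun _ => hne, fun hc => absurd hcv hc⟩
    · exact ⟨f v, hf v, fun hc => absurd hc hcv, fun _ => rfl⟩
  choose F hF hFne hFeq using hFex
  -- key step: at any point periodic for the backwards map of `F`, `F` agrees with `f`
  have key : ∀ w n, 0 < n → (fun x => G.s (F x))^[n] w = w → F w = f w := by
    intro w n hn hw
    by_contra hne
    have hcond : cond w := by
      by_contra hcw
      exact hne (hFeq w hcw)
    obtain ⟨kk, hkk, hkw⟩ := hcond.1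
    obtain ⟨c, hc, hcs, _, _, hcall⟩ :=
      cyc_spec G F hF (fun x => G.s (F x)) (fun _ => rfl) w n hn hw
    obtain ⟨d, hd, hds, hdm, _, _⟩ :=
      cyc_spec G f hf (fun x => G.s (f x)) (fun _ => rfl) w kk hkk hkw
    have hcd : c = d := hdc w c d hc hd hcs hds
    have hFc : F w ∈ c := hcall 0
    obtain ⟨i, hi⟩ := hdm (F w) (hcd ▸ hFc)
    have hwi : w = (fun x => G.s (f x))^[i] w := by
      conv_lhs => rw [← hF w, hi, hf]
    exact hne (hi.trans (congrArg f hwi).symm)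
  obtain ⟨u, n, hn, hu⟩ := exists_per (fun x => G.s (F x)) (Classical.arbitrary G.V)
  obtain ⟨c, hc, _, _, hsrc, hall⟩ :=
    cyc_spec G F hF (fun x => G.s (F x)) (fun _ => rfl) u n hn hu
  refine ⟨c, hc, fun e he => ?_⟩
  obtain ⟨i, hi⟩ := hsrc _ he
  set w := (fun x => G.s (F x))^[i] u with hwdef
  have hwper : (fun x => G.s (F x))^[n] w = w := by
    rw [hwdef, ← Function.iterate_add_apply, Nat.add_comm, Function.iterate_add_apply, hu]
  have hiter : ∀ j, (fun x => G.s (f x))^[j] w = (fun x => G.s (F x))^[j] w := by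
    intro j
    induction j with
    | zero => rfl
    | succ j ih =>
      rw [Function.iterate_succ_apply', Function.iterate_succ_apply', ih]
      have hperj : (fun x => G.s (F x))^[n] ((fun x => G.s (F x))^[j] w) =
          (fun x => G.s (F x))^[j] w := by
        rw [← Function.iterate_add_apply, Nat.add_comm, Function.iterate_add_apply, hwper]
      have hFj := key _ n hn hperj
      show G.s (f ((fun x => G.s (F x))^[j] w)) = G.s (F ((fun x => G.s (F x))^[j] w))
      rw [hFj]
  have hFw : F w = f w := key w n hn hwper
  have hef : e = f w := by
    by_contra hne
    have hcond : cond w := ⟨⟨n, hn, by rw [hiter n, hwper]⟩, e, hi, hne⟩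
    exact (hFne w hcond) hFw
  rw [hef, ← hFw, hwdef]
  exact hall i
end

section
/- Let E be a finite directed graph. Define a preorder on E⁰ by v ≤ u iff there exists a path from u to v, and let ≡ be the induced equivalence relation (u ≡ v iff u ≤ v and v ≤ u). If E has disjoint cycles, then each equivalence class of ≡ is either a single vertex or the set of vertices of a single cycle. -/
/-- `v ≤ u`: there is a (possibly trivial) path from `u` to `v`. -/
def DirGraph.Reaches (G : DirGraph) (u v : G.V) : Prop :=
  u = v ∨ ∃ p : List G.E, p ≠ [] ∧ G.IsPath p ∧ G.StartsAt p u ∧ G.EndsAt p v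

namespace DirGraph

variable {G : DirGraph}

private lemma getLast?_append' {α : Type*} {l l' : List α} (h : l' ≠ []) :
    (l ++ l').getLast? = l'.getLast? := by
  rw [List.getLast?_append]
  obtain ⟨a, ha⟩ := Option.isSome_iff_exists.mp (List.getLast?_isSome.mpr h)
  simp [ha]

lemma startsAt_cons {e : G.E} {p : List G.E} {x : G.V} :
    G.StartsAt (e :: p) x ↔ G.s e = x := by simp [StartsAt]

lemma startsAt_append_left {p q : List G.E} {x : G.V} (h : p ≠ []) :
    G.StartsAt (p ++ q) x ↔ G.StartsAt p x := by
  simp [StartsAt, List.head?_append_of_ne_nil _ h]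

lemma endsAt_append_right {p q : List G.E} {x : G.V} (h : q ≠ []) :
    G.EndsAt (p ++ q) x ↔ G.EndsAt q x := by
  simp [EndsAt, getLast?_append' h]

lemma isPath_append {p q : List G.E} {w : G.V} (hp : G.IsPath p) (hq : G.IsPath q)
    (hpw : G.EndsAt p w) (hqw : G.StartsAt q w) : G.IsPath (p ++ q) := by
  rw [IsPath, List.Chain', List.isChain_append]
  refine ⟨hp, hq, ?_⟩
  intro a ha b hb
  obtain ⟨e, he, hew⟩ := hpw
  obtain ⟨f, hf, hfw⟩ := hqw
  rw [Option.mem_unique ha he, Option.mem_unique hb hf, hew, hfw]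

lemma reaches_trans {u v w : G.V} (h1 : G.Reaches u v) (h2 : G.Reaches v w) :
    G.Reaches u w := by
  rcases h1 with rfl | ⟨p, hp0, hpp, hps, hpe⟩
  · exact h2
  rcases h2 with rfl | ⟨q, hq0, hqp, hqs, hqe⟩
  · exact Or.inr ⟨p, hp0, hpp, hps, hpe⟩
  exact Or.inr ⟨p ++ q, by simp [hp0], isPath_append hpp hqp hpe hqs,
    (startsAt_append_left hp0).mpr hps, (endsAt_append_right hq0).mpr hqe⟩

lemma endsAt_of_closed {p : List G.E} {x : G.V} (hp : G.IsClosedPath p)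
    (hs : G.StartsAt p x) : G.EndsAt p x := by
  obtain ⟨f, hf, hfx⟩ := hs
  obtain ⟨a, ha⟩ := Option.isSome_iff_exists.mp (List.getLast?_isSome.mpr hp.1)
  exact ⟨a, by simp [ha], by rw [hp.2.2 a (by simp [ha]) f hf, hfx]⟩

/-- Both directions of reachability between the base of a closed walk and
any vertex on it. -/
lemma reaches_of_mem_closed {W : List G.E} {v x : G.V} (hW : G.IsPath W)
    (hs : G.StartsAt W v) (he : G.EndsAt W v) (hx : x ∈ W.map G.s) :
    G.Reaches v x ∧ G.Reaches x v := by
  obtain ⟨e, heW, rfl⟩ := List.mem_map.mp hx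
  obtain ⟨a, b, rfl⟩ := List.append_of_mem heW
  have hchain := (List.isChain_append (l₁ := a) (l₂ := e :: b)).mp hW
  constructor
  · rcases a with _ | ⟨f, a'⟩
    · obtain ⟨g, hg, hgv⟩ := hs
      simp only [List.nil_append, List.head?_cons, Option.mem_some_iff] at hg
      exact Or.inl (by rw [← hgv, hg])
    · refine Or.inr ⟨f :: a', by simp, hchain.1,
        (startsAt_append_left (by simp)).mp hs, ?_⟩
      obtain ⟨g, hg⟩ := Option.isSome_iff_exists.mp
        (List.getLast?_isSome.mpr (List.cons_ne_nil f a'))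
      exact ⟨g, by simp [hg], hchain.2.2 g (by simp [hg]) e (by simp)⟩
  · exact Or.inr ⟨e :: b, by simp, hchain.2.1, startsAt_cons.mpr rfl,
      (endsAt_append_right (by simp)).mp he⟩

/-- The range of the starting edge of a closed walk is among the sources. -/
lemma r_head_mem {W : List G.E} {x : G.V} (hW : G.IsPath W)
    (hs : G.StartsAt W x) (he : G.EndsAt W x) {e : G.E} (hhd : e ∈ W.head?) :
    G.r e ∈ W.map G.s := by
  cases W with
  | nil => simp at hhd
  | cons f t =>
    simp only [List.head?_cons, Option.mem_some_iff] at hhd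
    subst hhd
    cases t with
    | nil =>
      obtain ⟨g, hg, hge⟩ := he
      simp only [List.getLast?_singleton, Option.mem_some_iff] at hg
      subst hg
      obtain ⟨g', hg', hg'e⟩ := hs
      simp only [List.head?_cons, Option.mem_some_iff] at hg'
      subst hg'
      simp [hge, ← hg'e]
    | cons f' t' =>
      have := (List.isChain_cons_cons.mp hW).1
      simp [this]

private lemma exists_dup_map {α β : Type*} (f : α → β) :
    ∀ {l : List α}, ¬ (l.map f).Nodup →
      ∃ a x b y c, l = a ++ x :: (b ++ y :: c) ∧ f x = f y := by
  intro l
  induction l with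
  | nil => simp
  | cons z t ih =>
    intro h
    rw [List.map_cons, List.nodup_cons] at h
    by_cases hz : f z ∈ t.map f
    · obtain ⟨y, hy, hfy⟩ := List.mem_map.mp hz
      obtain ⟨b, c, rfl⟩ := List.append_of_mem hy
      exact ⟨[], z, b, y, c, rfl, hfy.symm⟩
    · obtain ⟨a, x, b, y, c, rfl, hxy⟩ := ih fun hn => h ⟨hz, hn⟩
      exact ⟨z :: a, x, b, y, c, rfl, hxy⟩

/-- From any closed walk based at `x` one can extract a cycle based at `x`
starting with the same edge. -/
lemma extract {x : G.V} :
    ∀ (n : ℕ) (W : List G.E), W.length ≤ n → W ≠ [] → G.IsPath W →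
      G.StartsAt W x → G.EndsAt W x →
      ∃ c, G.IsCycle c ∧ G.StartsAt c x ∧ c.head? = W.head? := by
  intro n
  induction n with
  | zero =>
    intro W hlen h0
    exact absurd (List.length_eq_zero_iff.mp (Nat.le_zero.mp hlen)) h0
  | succ n ih =>
    intro W hlen h0 hW hs he
    by_cases hnd : (W.map G.s).Nodup
    · refine ⟨W, ⟨⟨h0, hW, ?_⟩, hnd⟩, hs, rfl⟩
      intro a ha b hb
      obtain ⟨e, he', hev⟩ := he
      obtain ⟨f, hf', hfv⟩ := hs
      rw [Option.mem_unique ha he', Option.mem_unique hb hf', hev, hfv]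
    · obtain ⟨a, e, b, f, c', hWeq, hef⟩ := exists_dup_map G.s hnd
      subst hWeq
      rcases a with _ | ⟨g, a'⟩
      · -- W = e :: (b ++ f :: c'), and s f = s e = x
        have hse : G.s e = x := by
          simpa using (startsAt_cons.mp (by simpa using hs))
        have hW' : G.IsPath ((e :: b) ++ (f :: c')) := by simpa using hW
        have hchain := (List.isChain_append (l₁ := e :: b) (l₂ := f :: c')).mp hW'
        refine ih (e :: b) ?_ (by simp) hchain.1 (startsAt_cons.mpr hse) ?_
        · simp only [List.nil_append, List.length_cons, List.length_append] at hlen ⊢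
          omega
        · obtain ⟨g, hg⟩ := Option.isSome_iff_exists.mp
            (List.getLast?_isSome.mpr (List.cons_ne_nil e b))
          refine ⟨g, by simp [hg], ?_⟩
          rw [hchain.2.2 g (by simp [hg]) f (by simp), ← hef, hse]
      · -- W = (g :: a') ++ e :: (b ++ f :: c')
        set a : List G.E := g :: a' with ha
        have hchain := (List.isChain_append (l₁ := a) (l₂ := e :: (b ++ f :: c'))).mp hW
        have hlink : ∀ y ∈ a.getLast?, G.r y = G.s e := fun y hy =>
          hchain.2.2 y hy e (by simp)
        have hbfc : ((e :: b) ++ (f :: c')).Chain' (fun e f => G.r e = G.s f) := by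
          simpa [List.Chain'] using hchain.2.1
        have hfc' := (List.isChain_append.mp hbfc).2.1
        have hlen' : (a ++ f :: c').length ≤ n := by
          simp only [List.length_append, List.length_cons, ha] at hlen ⊢
          omega
        have hpath' : G.IsPath (a ++ f :: c') := by
          rw [IsPath, List.Chain', List.isChain_append]
          exact ⟨hchain.1, hfc', fun y hy z hz => by
            rw [Option.mem_unique hz (by simp : f ∈ (f :: c').head?), ← hef,
              hlink y hy]⟩
        have hstart' : G.StartsAt (a ++ f :: c') x := by
          rw [startsAt_append_left (by simp [ha])]
          exact (startsAt_append_left (by simp [ha])).mp hs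
        have hend' : G.EndsAt (a ++ f :: c') x := by
          rw [endsAt_append_right (by simp)]
          have h1 := (endsAt_append_right (p := a) (by simp : (e :: (b ++ f :: c')) ≠ [])).mp he
          rw [show e :: (b ++ f :: c') = (e :: b) ++ (f :: c') by simp] at h1
          exact (endsAt_append_right (by simp)).mp h1
        obtain ⟨c'', hc'', hs'', hh''⟩ :=
          ih (a ++ f :: c') hlen' (by simp [ha]) hpath' hstart' hend'
        refine ⟨c'', hc'', hs'', ?_⟩
        rw [hh'', List.head?_append_of_ne_nil _ (by simp [ha]),
          List.head?_append_of_ne_nil _ (by simp [ha])]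

/-- With disjoint cycles, all closed walks based at `x` start with the same
edge. -/
lemma head_eq (hdc : G.HasDisjointCycles) {x : G.V} {W1 W2 : List G.E}
    (h01 : W1 ≠ []) (hW1 : G.IsPath W1) (hs1 : G.StartsAt W1 x) (he1 : G.EndsAt W1 x)
    (h02 : W2 ≠ []) (hW2 : G.IsPath W2) (hs2 : G.StartsAt W2 x) (he2 : G.EndsAt W2 x) :
    W1.head? = W2.head? := by
  obtain ⟨c1, hc1, hcs1, hh1⟩ := extract W1.length W1 le_rfl h01 hW1 hs1 he1
  obtain ⟨c2, hc2, hcs2, hh2⟩ := extract W2.length W2 le_rfl h02 hW2 hs2 he2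
  rw [← hh1, ← hh2, hdc x c1 c2 hc1 hc2 hcs1 hcs2]

/-- A cycle can be rotated to be based at any of its vertices. -/
lemma rotate {c : List G.E} (hc : G.IsCycle c) {x : G.V} (hx : x ∈ c.map G.s) :
    ∃ d, G.IsCycle d ∧ G.StartsAt d x ∧ ∀ y, y ∈ d.map G.s ↔ y ∈ c.map G.s := by
  obtain ⟨e, hec, rfl⟩ := List.mem_map.mp hx
  obtain ⟨a, b, rfl⟩ := List.append_of_mem hec
  rcases a with _ | ⟨g, a'⟩
  · exact ⟨e :: b, by simpa using hc, startsAt_cons.mpr rfl, fun y => Iff.rfl⟩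
  set a : List G.E := g :: a' with ha
  have hW := hc.1.2.1
  have hchain := (List.isChain_append (l₁ := a) (l₂ := e :: b)).mp hW
  have hclosed := hc.1.2.2
  refine ⟨(e :: b) ++ a, ⟨⟨by simp, ?_, ?_⟩, ?_⟩, ?_, ?_⟩
  · rw [IsPath, List.Chain', List.isChain_append]
    refine ⟨hchain.2.1, hchain.1, ?_⟩
    intro y hy z hz
    have hy' : y ∈ (a ++ e :: b).getLast? := by
      rw [getLast?_append' (by simp)]; exact hy
    have hz' : z ∈ (a ++ e :: b).head? := by
      rw [List.head?_append_of_ne_nil _ (by simp [ha])]; exact hz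
    exact hclosed y hy' z hz'
  · intro y hy z hz
    rw [getLast?_append' (by simp [ha])] at hy
    rw [Option.mem_unique hz (by simp : e ∈ ((e :: b) ++ a).head?)]
    exact hchain.2.2 y hy e (by simp)
  · have hperm : (((e :: b) ++ a).map G.s).Perm ((a ++ e :: b).map G.s) := by
      simpa using (List.perm_append_comm (l₁ := (e :: b).map G.s) (l₂ := a.map G.s))
    exact hc.2.perm hperm.symm
  · exact (startsAt_append_left (by simp)).mpr (startsAt_cons.mpr rfl)
  · intro y
    have hperm : (((e :: b) ++ a).map G.s).Perm ((a ++ e :: b).map G.s) := by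
      simpa using (List.perm_append_comm (l₁ := (e :: b).map G.s) (l₂ := a.map G.s))
    exact hperm.mem_iff

/-- Key step: an edge leaving a cycle vertex and able to come back to the
base of the cycle must be a cycle edge, so its range is a cycle vertex. -/
lemma succ_mem (hdc : G.HasDisjointCycles) {c : List G.E} {v : G.V}
    (hc : G.IsCycle c) (hcs : G.StartsAt c v) {x : G.V} (hx : x ∈ c.map G.s)
    {e : G.E} (hse : G.s e = x) (hre : G.Reaches (G.r e) v) :
    G.r e ∈ c.map G.s := by
  have hce := endsAt_of_closed hc.1 hcs
  have hvx := reaches_of_mem_closed hc.1.2.1 hcs hce hx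
  have hrx : G.Reaches (G.r e) x := reaches_trans hre hvx.1
  obtain ⟨W, hW0, hWp, hWhd, hWs, hWe⟩ :
      ∃ W, W ≠ [] ∧ G.IsPath W ∧ e ∈ W.head? ∧ G.StartsAt W x ∧ G.EndsAt W x := by
    rcases hrx with h | ⟨m, hm0, hmp, hms, hme⟩
    · exact ⟨[e], by simp, by simp [IsPath, List.Chain'], by simp, startsAt_cons.mpr hse,
        ⟨e, by simp, h⟩⟩
    · refine ⟨e :: m, by simp, ?_, by simp, startsAt_cons.mpr hse, ?_⟩
      · rw [IsPath, List.Chain', List.isChain_cons]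
        exact ⟨fun y hy => by
          obtain ⟨f, hf, hfr⟩ := hms
          rw [Option.mem_unique hy hf, hfr], hmp⟩
      · rw [show e :: m = [e] ++ m by simp, endsAt_append_right hm0]
        exact hme
  obtain ⟨d, hd, hds, hdmem⟩ := rotate hc hx
  have hde := endsAt_of_closed hd.1 hds
  have hheq := head_eq hdc hW0 hWp hWs hWe hd.1.1 hd.1.2.1 hds hde
  have hed : e ∈ d.head? := hheq ▸ hWhd
  exact (hdmem _).mp (r_head_mem hd.1.2.1 hds hde hed)

/-- Walking from a cycle vertex, if the end can reach back to the base of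
the cycle, the end is a cycle vertex. -/
lemma stay (hdc : G.HasDisjointCycles) {c : List G.E} {v : G.V}
    (hc : G.IsCycle c) (hcs : G.StartsAt c v) :
    ∀ (p : List G.E), p ≠ [] → G.IsPath p → ∀ x y, G.StartsAt p x →
      G.EndsAt p y → x ∈ c.map G.s → G.Reaches y v → y ∈ c.map G.s := by
  intro p
  induction p with
  | nil => simp
  | cons e t ih =>
    intro _ hp x y hs he hx hyv
    have hse : G.s e = x := startsAt_cons.mp hs
    cases t with
    | nil =>
      obtain ⟨g, hg, hgy⟩ := he
      simp only [List.getLast?_singleton, Option.mem_some_iff] at hg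
      subst hg
      rw [← hgy]
      exact succ_mem hdc hc hcs hx hse (hgy ▸ hyv)
    | cons f t' =>
      have hchain := List.isChain_cons_cons.mp hp
      have he' : G.EndsAt (f :: t') y := by
        rw [show e :: f :: t' = [e] ++ (f :: t') by simp,
          endsAt_append_right (by simp)] at he
        exact he
      have hry : G.Reaches (G.r e) y :=
        Or.inr ⟨f :: t', by simp, hchain.2, startsAt_cons.mpr hchain.1.symm, he'⟩
      have hre_mem : G.r e ∈ c.map G.s :=
        succ_mem hdc hc hcs hx hse (reaches_trans hry hyv)
      exact ih (by simp) hchain.2 (G.r e) y (startsAt_cons.mpr hchain.1.symm)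
        he' hre_mem hyv

end DirGraph

/-- In a finite graph with disjoint cycles, each equivalence class of the
relation `u ≡ v ↔ (u ≤ v ∧ v ≤ u)` is either a single vertex or the set of
vertices of a single cycle. -/
theorem stmt5 (G : DirGraph) [Finite G.V] [Finite G.E]
    (hdc : G.HasDisjointCycles) (v : G.V) :
    ({u : G.V | G.Reaches u v ∧ G.Reaches v u} = {v}) ∨
      ∃ c : List G.E, G.IsCycle c ∧
        {u : G.V | G.Reaches u v ∧ G.Reaches v u} = {w : G.V | w ∈ c.map G.s} := by
  by_cases hS : {u : G.V | G.Reaches u v ∧ G.Reaches v u} = {v}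
  · exact Or.inl hS
  right
  have hex : ∃ u, (G.Reaches u v ∧ G.Reaches v u) ∧ u ≠ v := by
    by_contra h
    push_neg at h
    apply hS
    ext u
    simp only [Set.mem_setOf_eq, Set.mem_singleton_iff]
    exact ⟨fun hu => h u hu, fun hu => by subst hu; exact ⟨Or.inl rfl, Or.inl rfl⟩⟩
  obtain ⟨u, ⟨huv, hvu⟩, hne⟩ := hex
  rcases hvu with h | ⟨p, hp0, hpp, hps, hpe⟩
  · exact absurd h.symm hne
  rcases huv with h | ⟨q, hq0, hqp, hqs, hqe⟩
  · exact absurd h hne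
  obtain ⟨c, hc, hcs, _⟩ := DirGraph.extract (p ++ q).length (p ++ q) le_rfl
    (by simp [hp0]) (DirGraph.isPath_append hpp hqp hpe hqs)
    ((DirGraph.startsAt_append_left hp0).mpr hps)
    ((DirGraph.endsAt_append_right hq0).mpr hqe)
  refine ⟨c, hc, ?_⟩
  have hvc : v ∈ c.map G.s := by
    obtain ⟨e, he, hev⟩ := hcs
    exact List.mem_map.mpr ⟨e, List.mem_of_mem_head? he, hev⟩
  ext w
  simp only [Set.mem_setOf_eq]
  constructor
  · rintro ⟨hwv, hvw⟩
    rcases hvw with h | ⟨m, hm0, hmp, hms, hme⟩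
    · exact h ▸ hvc
    · exact DirGraph.stay hdc hc hcs m hm0 hmp v w hms hme hvc hwv
  · intro hw
    have := DirGraph.reaches_of_mem_closed hc.1.2.1 hcs
      (DirGraph.endsAt_of_closed hc.1 hcs) hw
    exact ⟨this.2, this.1⟩
end

section
/- Let E be a finite graph with disjoint cycles and c a cycle (or sink) in E. Then no path in P^E_c ends with a traverse of a closed path; that is, if γ ∈ P^E_c then γ cannot be written as γ'δ for a closed path δ with s(δ) = r(δ) = r(γ). -/
private lemma pair_sublist_split {α : Type*} {x y : α} {l : List α} (h : List.Sublist [x, y] l) :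
    ∃ A B C, l = A ++ x :: B ++ y :: C := by
  induction l with
  | nil => simp at h
  | cons z t ih =>
    cases h with
    | cons _ h' =>
        obtain ⟨A, B, C, rfl⟩ := ih h'
        exact ⟨z :: A, B, C, rfl⟩
    | cons_cons _ h' =>
        obtain ⟨B, C, rfl⟩ := List.append_of_mem (List.singleton_sublist.mp h')
        exact ⟨[], B, C, rfl⟩

private lemma dup_split {α β : Type*} (f : α → β) (l : List α) (h : ¬ (l.map f).Nodup) :
    ∃ A x B y C, l = A ++ x :: B ++ y :: C ∧ f x = f y := by
  rw [List.nodup_iff_sublist] at h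
  push_neg at h
  obtain ⟨a, ha⟩ := h
  rw [List.sublist_map_iff] at ha
  obtain ⟨l', hl', hm⟩ := ha
  obtain ⟨x, y, rfl⟩ : ∃ x y, l' = [x, y] := by
    cases l' with
    | nil => simp at hm
    | cons x t =>
      cases t with
      | nil => simp at hm
      | cons y u =>
        cases u with
        | nil => exact ⟨x, y, rfl⟩
        | cons z v => simp at hm
  obtain ⟨A, B, C, rfl⟩ := pair_sublist_split hl'
  simp only [List.map_cons, List.map_nil, List.cons.injEq, List.nil_eq] at hm
  exact ⟨A, x, B, y, C, rfl, hm.1.symm.trans hm.2.1⟩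

private lemma key (G : DirGraph) (hdc : G.HasDisjointCycles) :
    ∀ (n : ℕ) (δ c : List G.E) (v : G.V), δ.length ≤ n → δ ≠ [] →
    G.IsPath δ → (∀ e ∈ δ.head?, G.s e = v) → (∀ e ∈ δ.getLast?, G.r e = v) →
    G.IsCycle c → (∀ e ∈ c.head?, G.s e = v) →
    ∃ δ₀, δ = δ₀ ++ c := by
  intro n
  induction n with
  | zero =>
      intro δ c v hlen hne _ _ _ _ _
      rw [Nat.le_zero, List.length_eq_zero_iff] at hlen
      exact absurd hlen hne
  | succ n ih =>
      intro δ c v hlen hne hpath hhead hlast hc hchead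
      by_cases hnd : (δ.map G.s).Nodup
      · -- δ itself is a cycle based at v, hence δ = c
        have hδc : G.IsCycle δ :=
          ⟨⟨hne, hpath, fun e he f hf => (hlast e he).trans (hhead f hf).symm⟩, hnd⟩
        have hcne : c ≠ [] := hc.1.1
        have h1 : G.StartsAt δ v :=
          ⟨δ.head hne, by simp [List.head?_eq_head hne], hhead _ (by simp [List.head?_eq_head hne])⟩
        have h2 : G.StartsAt c v :=
          ⟨c.head hcne, by simp [List.head?_eq_head hcne], hchead _ (by simp [List.head?_eq_head hcne])⟩
        exact ⟨[], by rw [← hdc v δ c hδc hc h1 h2]; simp⟩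
      · obtain ⟨A, x, B', y, C', hδeq, hsxy⟩ := dup_split G.s δ hnd
        set μ : List G.E := x :: B' with hμdef
        set B : List G.E := y :: C' with hBdef
        have hμne : μ ≠ [] := by simp [hμdef]
        have hBne : B ≠ [] := by simp [hBdef]
        have hδ2 : δ = (A ++ μ) ++ B := by
          rw [hδeq] <;> rw [List.append_assoc]
        -- chain decomposition
        have hch : ((A ++ μ) ++ B).Chain' (fun e f => G.r e = G.s f) := hδ2 ▸ hpath
        simp only [List.Chain'] at hch; rw [List.isChain_append, List.isChain_append] at hch
        obtain ⟨⟨hchA, hchμ, hjAμ⟩, hchB, hjμB⟩ := hch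
        have hμhead? : μ.head? = some x := rfl
        have hBhead? : B.head? = some y := rfl
        -- last of A++μ is last of μ
        have hglAμ : (A ++ μ).getLast? = μ.getLast? := by
          rw [List.getLast?_append]
          cases h : μ.getLast? with
          | none => exact absurd (List.getLast?_eq_none_iff.mp h) hμne
          | some e => rfl
        -- r (last μ) = s y
        have hμlast : ∀ e ∈ μ.getLast?, G.r e = G.s y := by
          intro e he
          exact hjμB e (by rw [hglAμ]; exact he) y (by rw [hBhead?]; rfl)
        -- δ' := A ++ B is a closed path at v, shorter
        have hjAB : ∀ e ∈ A.getLast?, ∀ f ∈ B.head?, G.r e = G.s f := by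
          intro e he f hf
          rw [hBhead?, Option.mem_some_iff] at hf
          subst hf
          have := hjAμ e he x (by rw [hμhead?]; rfl)
          rw [this, hsxy]
        have hchAB : (A ++ B).Chain' (fun e f => G.r e = G.s f) := by
          simp only [List.Chain']; rw [List.isChain_append]; exact ⟨hchA, hchB, hjAB⟩
        have hABne : A ++ B ≠ [] := by simp [hBdef]
        have hheadAB : ∀ e ∈ (A ++ B).head?, G.s e = v := by
          intro e he
          cases A with
          | nil =>
              simp only [List.nil_append] at he
              rw [hBhead?, Option.mem_some_iff] at he
              subst he
              have : G.s x = v := by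
                apply hhead
                rw [hδ2]
                simp [hμdef]
              rw [← hsxy]; exact this
          | cons a A' =>
              have h1 : ((a :: A') ++ B).head? = some a := rfl
              rw [h1, Option.mem_some_iff] at he
              subst he
              apply hhead
              rw [hδ2]
              rfl
        have hglB : ∀ (X : List G.E), (X ++ B).getLast? = B.getLast? := by
          intro X
          rw [List.getLast?_append]
          cases h : B.getLast? with
          | none => exact absurd (List.getLast?_eq_none_iff.mp h) hBne
          | some e => rfl
        have hlastAB : ∀ e ∈ (A ++ B).getLast?, G.r e = v := by
          intro e he
          apply hlast
          rw [hδ2, hglB ((A ++ μ)), ← hglB A]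
          exact he
        have hδlen : δ.length = A.length + (μ.length + B.length) := by
          rw [hδ2]; simp
        have hlenAB : (A ++ B).length ≤ n := by
          have hμ1 : 1 ≤ μ.length := by simp [hμdef]
          simp only [List.length_append]
          omega
        obtain ⟨δ₀', hδ₀'⟩ := ih (A ++ B) c v hlenAB hABne hchAB hheadAB hlastAB hc hchead
        rcases List.append_eq_append_iff.mp hδ₀'.symm with ⟨A₂, hAeq, hc2⟩ | ⟨b', hδ₀eq, hBeq⟩
        swap
        · -- B = b' ++ c : c is a suffix of B
          exact ⟨A ++ μ ++ b', by rw [hδ2, hBeq]; simp⟩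
        · -- A = δ₀' ++ A₂, c = A₂ ++ B
          rcases eq_or_ne A₂ [] with rfl | hA₂ne
          · -- c = B
            simp only [List.nil_append] at hc2
            exact ⟨A ++ μ, by rw [hδ2, hc2]⟩
          · -- rotation case
            set crot : List G.E := B ++ A₂ with hcrotdef
            have hw : G.s y = G.s y := rfl
            -- facts about c = A₂ ++ B
            have hcch : c.Chain' (fun e f => G.r e = G.s f) := hc.1.2.1
            simp only [List.Chain'] at hcch; rw [hc2, List.isChain_append] at hcch
            obtain ⟨hchA₂, -, hjA₂B⟩ := hcch
            have hA₂head? : ∃ e, A₂.head? = some e := by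
              cases A₂ with
              | nil => exact absurd rfl hA₂ne
              | cons a t => exact ⟨a, rfl⟩
            obtain ⟨a₀, ha₀⟩ := hA₂head?
            have hchead' : G.s a₀ = v := by
              apply hchead
              rw [hc2, List.head?_append, ha₀]
              rfl
            have hA₂last? : ∃ e, A₂.getLast? = some e := by
              cases h : A₂.getLast? with
              | none => exact absurd (List.getLast?_eq_none_iff.mp h) hA₂ne
              | some e => exact ⟨e, rfl⟩
            obtain ⟨a₁, ha₁⟩ := hA₂last?
            have hjA₂B' : G.r a₁ = G.s y := hjA₂B a₁ (by rw [ha₁]; rfl) y (by rw [hBhead?]; rfl)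
            -- crot is a cycle based at s y
            have hcrotne : crot ≠ [] := by simp [hcrotdef, hBdef]
            have hcrotch : crot.Chain' (fun e f => G.r e = G.s f) := by
              simp only [List.Chain']; rw [hcrotdef, List.isChain_append]
              refine ⟨hchB, hchA₂, ?_⟩
              intro e he f hf
              have hev : G.r e = v := by
                apply hlast
                rw [hδ2, hglB (A ++ μ), ← hglB []]
                simpa using he
              rw [ha₀, Option.mem_some_iff] at hf
              subst hf
              rw [hev, hchead']
            have hcrotclosed : ∀ e ∈ crot.getLast?, ∀ f ∈ crot.head?, G.r e = G.s f := by
              intro e he f hf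
              have h1 : crot.getLast? = A₂.getLast? := by
                rw [hcrotdef, List.getLast?_append, ha₁]; rfl
              rw [h1, ha₁, Option.mem_some_iff] at he
              subst he
              have h2 : crot.head? = some y := by
                rw [hcrotdef, List.head?_append, hBhead?]; rfl
              rw [h2, Option.mem_some_iff] at hf
              subst hf
              exact hjA₂B'
            have hcrotnd : (crot.map G.s).Nodup := by
              have hp : (c.map G.s).Perm (crot.map G.s) := by
                rw [hcrotdef, hc2, List.map_append, List.map_append]
                exact List.perm_append_comm
              exact hp.nodup hc.2
            have hcrotcyc : G.IsCycle crot := ⟨⟨hcrotne, hcrotch, hcrotclosed⟩, hcrotnd⟩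
            have hcrothead : ∀ e ∈ crot.head?, G.s e = G.s y := by
              intro e he
              have h2 : crot.head? = some y := by
                rw [hcrotdef, List.head?_append, hBhead?]; rfl
              rw [h2, Option.mem_some_iff] at he
              subst he; rfl
            -- μ is a closed path at s y, shorter
            have hμheadv : ∀ e ∈ μ.head?, G.s e = G.s y := by
              intro e he
              rw [hμhead?, Option.mem_some_iff] at he
              subst he; exact hsxy
            have hlenμ : μ.length ≤ n := by
              have hB1' : 1 ≤ B.length := by simp [hBdef]
              omega
            obtain ⟨μ₀, hμ₀⟩ :=
              ih μ crot (G.s y) hlenμ hμne hchμ hμheadv hμlast hcrotcyc hcrothead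
            refine ⟨A ++ μ₀ ++ B, ?_⟩
            rw [hδ2, hμ₀, hc2, hcrotdef]
            simp

/-- In a graph with disjoint cycles, no path in `P^E_c` (for `c` a sink or a
proper cycle) ends with a complete traverse of a closed path. -/
theorem stmt7 (G : DirGraph) [Finite G.V] [Finite G.E]
    (hdc : G.HasDisjointCycles) (γ : List G.E) (hγ : G.IsPath γ)
    (hP : (∃ w : G.V, (∀ e : G.E, G.s e ≠ w) ∧ ∀ e ∈ γ.getLast?, G.r e = w) ∨
      (∃ (c : List G.E) (v : G.V), G.IsCycle c ∧ G.StartsAt c v ∧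
        (∀ e ∈ γ.getLast?, G.r e = v) ∧ ¬∃ γ' : List G.E, γ = γ' ++ c)) :
    ¬∃ (γ' δ : List G.E), δ ≠ [] ∧ G.IsClosedPath δ ∧ γ = γ' ++ δ := by
  rintro ⟨γ', δ, hδne, ⟨-, hδpath, hδclosed⟩, rfl⟩
  -- last of γ' ++ δ is last of δ
  obtain ⟨d, hd⟩ : ∃ d, δ.getLast? = some d := by
    cases h : δ.getLast? with
    | none => exact absurd (List.getLast?_eq_none_iff.mp h) hδne
    | some e => exact ⟨e, rfl⟩
  have hglast : (γ' ++ δ).getLast? = some d := by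
    rw [List.getLast?_append, hd]; rfl
  obtain ⟨h0, hh0⟩ : ∃ h0, δ.head? = some h0 := by
    cases h : δ.head? with
    | none => exact absurd (List.head?_eq_none_iff.mp h) hδne
    | some e => exact ⟨e, rfl⟩
  have hclose : G.r d = G.s h0 :=
    hδclosed d (by rw [hd]; rfl) h0 (by rw [hh0]; rfl)
  rcases hP with ⟨w, hw, hr⟩ | ⟨c, v, hc, hcstart, hr, hnot⟩
  · have : G.r d = w := hr d (by rw [hglast]; rfl)
    exact hw h0 (by rw [← hclose, this])
  · have hrd : G.r d = v := hr d (by rw [hglast]; rfl)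
    have hδhead : ∀ e ∈ δ.head?, G.s e = v := by
      intro e he
      rw [hh0, Option.mem_some_iff] at he
      subst he
      rw [← hclose, hrd]
    have hδlast : ∀ e ∈ δ.getLast?, G.r e = v := by
      intro e he
      rw [hd, Option.mem_some_iff] at he
      subst he
      exact hrd
    have hchead : ∀ e ∈ c.head?, G.s e = v := by
      intro f hf
      obtain ⟨e, he, hev⟩ := hcstart
      rw [Option.mem_def] at he hf
      rw [he, Option.some_inj] at hf
      subst hf
      exact hev
    obtain ⟨δ₀, hδ₀⟩ :=
      key G hdc δ.length δ c v le_rfl hδne hδpath hδhead hδlast hc hchead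
    exact hnot ⟨γ' ++ δ₀, by rw [hδ₀]; simp⟩
end

section
/- Let E be a finite graph with a source loop τ based at vertex t (so τ is a loop at t and no other edge ends at t). Let ε be an edge with s(ε) = t, ε ≠ τ. Then in L_K(E), for every polynomial p(x) = 1 + a₁x + ⋯ + a_m x^m ∈ K[x] with constant term 1 and every ℓ ≥ 0, the element ε*(τ*)^ℓ belongs to the left ideal L_K(E)·p(τ), where p(τ) = 1 + a₁τ + ⋯ + a_mτ^m. -/
open scoped Classical

/-- Generators of the Leavitt path algebra: vertices, edges and ghost edges. -/
inductive LGen (G : DirGraph) where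
  | vtx : G.V → LGen G
  | edg : G.E → LGen G
  | ghd : G.E → LGen G

variable (K : Type) [Field K] (G : DirGraph) [Fintype G.E]

open FreeAlgebra in
/-- The defining relations of the Leavitt path algebra `L_K(E)`. -/
inductive LRel : FreeAlgebra K (LGen G) → FreeAlgebra K (LGen G) → Prop
  | vtx_mul (u v : G.V) :
      LRel (ι K (LGen.vtx u) * ι K (LGen.vtx v))
        (if u = v then ι K (LGen.vtx u) else 0)
  | s_edge (e : G.E) : LRel (ι K (LGen.vtx (G.s e)) * ι K (LGen.edg e)) (ι K (LGen.edg e))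
  | edge_r (e : G.E) : LRel (ι K (LGen.edg e) * ι K (LGen.vtx (G.r e))) (ι K (LGen.edg e))
  | r_ghost (e : G.E) : LRel (ι K (LGen.vtx (G.r e)) * ι K (LGen.ghd e)) (ι K (LGen.ghd e))
  | ghost_s (e : G.E) : LRel (ι K (LGen.ghd e) * ι K (LGen.vtx (G.s e))) (ι K (LGen.ghd e))
  | ck1 (e f : G.E) :
      LRel (ι K (LGen.ghd e) * ι K (LGen.edg f))
        (if e = f then ι K (LGen.vtx (G.r f)) else 0)
  | ck2 (v : G.V) (h : ∃ e, G.s e = v) :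
      LRel (ι K (LGen.vtx v))
        (∑ e ∈ Finset.univ.filter (fun e => G.s e = v),
          ι K (LGen.edg e) * ι K (LGen.ghd e))

/-- The Leavitt path algebra `L_K(E)` of a finite graph `E` over a field `K`. -/
def LPA := RingQuot (LRel K G)

noncomputable instance : Ring (LPA K G) := inferInstanceAs (Ring (RingQuot (LRel K G)))
noncomputable instance : Algebra K (LPA K G) :=
  inferInstanceAs (Algebra K (RingQuot (LRel K G)))

/-- The vertex idempotent `v ∈ L_K(E)`. -/
noncomputable def vtxL (v : G.V) : LPA K G :=
  RingQuot.mkAlgHom K (LRel K G) (FreeAlgebra.ι K (LGen.vtx v))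

/-- The (real) edge `e ∈ L_K(E)`. -/
noncomputable def edgL (e : G.E) : LPA K G :=
  RingQuot.mkAlgHom K (LRel K G) (FreeAlgebra.ι K (LGen.edg e))

/-- The ghost edge `e* ∈ L_K(E)`. -/
noncomputable def ghdL (e : G.E) : LPA K G :=
  RingQuot.mkAlgHom K (LRel K G) (FreeAlgebra.ι K (LGen.ghd e))

/-- The element of `L_K(E)` given by a path `p` ending at `v` (the trivial
path at `v` yields the vertex idempotent `v`). -/
noncomputable def pathTo (p : List G.E) (v : G.V) : LPA K G :=
  (p.map (edgL K G)).prod * vtxL K G v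

/-- The element `p* ∈ L_K(E)` for a path `p` ending at `v`. -/
noncomputable def starPathTo (p : List G.E) (v : G.V) : LPA K G :=
  vtxL K G v * (p.reverse.map (ghdL K G)).prod

section Aux

variable {K G}

lemma lrel_eq {x y : FreeAlgebra K (LGen G)} (h : LRel K G x y) :
    RingQuot.mkAlgHom K (LRel K G) x = RingQuot.mkAlgHom K (LRel K G) y :=
  RingQuot.mkAlgHom_rel _ h

lemma ghd_mul_edg (e f : G.E) :
    ghdL K G e * edgL K G f =
      if e = f then vtxL K G (G.r f) else 0 := by
  unfold ghdL edgL vtxL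
  erw [← (RingQuot.mkAlgHom K (LRel K G)).map_mul, lrel_eq (LRel.ck1 e f)]
  by_cases h : e = f
  · rw [if_pos h]
    exact (if_pos h).symm
  · rw [if_neg h]
    exact (map_zero _).trans (if_neg h).symm

lemma ghd_mul_vtx_s (e : G.E) :
    ghdL K G e * vtxL K G (G.s e) = ghdL K G e := by
  unfold ghdL vtxL
  erw [← (RingQuot.mkAlgHom K (LRel K G)).map_mul, lrel_eq (LRel.ghost_s e)]

lemma key_mul {τ ε : G.E} (hloop : G.r τ = G.s τ) (hε : G.s ε = G.s τ)
    (hne : ε ≠ τ) (m : ℕ) :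
    ghdL K G ε * (ghdL K G τ) ^ m * vtxL K G (G.s τ) =
      ghdL K G ε * (ghdL K G τ) ^ m := by
  cases m with
  | zero => simpa using (by rw [← hε]; exact ghd_mul_vtx_s ε)
  | succ n =>
      rw [pow_succ, ← mul_assoc, mul_assoc _ (ghdL K G τ), ← hε]
      nth_rewrite 1 [hε]
      rw [ghd_mul_vtx_s τ]

lemma key_pow {τ ε : G.E} (hloop : G.r τ = G.s τ) (hε : G.s ε = G.s τ)
    (hne : ε ≠ τ) (ℓ k : ℕ) :
    ghdL K G ε * (ghdL K G τ) ^ ℓ * (edgL K G τ) ^ k =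
      if k ≤ ℓ then ghdL K G ε * (ghdL K G τ) ^ (ℓ - k) else 0 := by
  induction k with
  | zero => simp
  | succ n ih =>
      rw [pow_succ, ← mul_assoc, ih]
      by_cases h : n ≤ ℓ
      · rw [if_pos h]
        rcases Nat.lt_or_ge n ℓ with hlt | hge
        · rw [if_pos (show n + 1 ≤ ℓ from hlt)]
          obtain ⟨m, hm⟩ := Nat.exists_eq_add_of_lt hlt
          have : ℓ - n = m + 1 := by omega
          rw [this]
          have : ℓ - (n + 1) = m := by omega
          rw [this, pow_succ, mul_assoc, mul_assoc, ghd_mul_edg τ τ, if_pos rfl,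
            hloop, ← mul_assoc, key_mul hloop hε hne]
        · have hn : n = ℓ := le_antisymm h hge
          rw [if_neg (by omega), hn, Nat.sub_self, pow_zero, mul_one,
            ghd_mul_edg ε τ, if_neg hne]
      · rw [if_neg h, if_neg (by omega), zero_mul]

end Aux

/-- If `τ` is a source loop at `t` and `ε ≠ τ` is an edge with `s(ε) = t`, then
for every polynomial `p` with constant term `1` and every `ℓ ≥ 0`, the element
`ε*(τ*)^ℓ` lies in the left ideal `L_K(E)·p(τ)`. -/
theorem stmt15 [Fintype G.V] (τ : G.E) (hloop : G.r τ = G.s τ)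
    (hsource : ∀ e : G.E, G.r e = G.s τ → e = τ)
    (ε : G.E) (hε : G.s ε = G.s τ) (hne : ε ≠ τ)
    (p : Polynomial K) (hp : p.coeff 0 = 1) (ℓ : ℕ) :
    ghdL K G ε * (ghdL K G τ) ^ ℓ ∈
      Submodule.span (LPA K G) {Polynomial.aeval (edgL K G τ) p} := by
  induction ℓ using Nat.strong_induction_on with
  | _ ℓ ih =>
    set a := edgL K G τ with ha
    set x := ghdL K G ε * (ghdL K G τ) ^ ℓ with hx
    set S := Submodule.span (LPA K G) {Polynomial.aeval a p} with hS
    have hspan : x * Polynomial.aeval a p ∈ S := by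
      simpa [smul_eq_mul] using
        Submodule.smul_mem S x (Submodule.mem_span_singleton_self (Polynomial.aeval a p))
    have hexp : x * Polynomial.aeval a p =
        ∑ i ∈ Finset.range (p.natDegree + 1), p.coeff i • (x * a ^ i) := by
      rw [Polynomial.aeval_eq_sum_range, Finset.mul_sum]
      simp [mul_smul_comm]
    have hmem : ∀ i ∈ Finset.range p.natDegree,
        p.coeff (i + 1) • (x * a ^ (i + 1)) ∈ S := by
      intro i _
      rw [hx, ha, key_pow hloop hε hne]
      by_cases h : i + 1 ≤ ℓ
      · rw [if_pos h]
        exact Submodule.smul_of_tower_mem _ _ (ih (ℓ - (i + 1)) (by omega))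
      · rw [if_neg h, smul_zero]
        exact Submodule.zero_mem _
    have hkey : x = x * Polynomial.aeval a p -
        ∑ i ∈ Finset.range p.natDegree, p.coeff (i + 1) • (x * a ^ (i + 1)) := by
      rw [hexp, Finset.sum_range_succ']
      simp [hp]
    show x ∈ S
    rw [hkey]
    exact Submodule.sub_mem _ hspan (Submodule.sum_mem _ hmem)
end
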